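/- Fix an integer S ≥ 1, β > 0, probabilities p_1, …, p_S > 0 with ∑_{s=1}^S p_s = 1, real numbers g_0, …, g_S, b_{-1} ∈ ℝ, b > 0, and labor supplies ℓ_0, …, ℓ_S ∈ [0,1). Then the following are equivalent: (1) there exist c_0, …, c_S > 0, τ_0, …, τ_S ∈ ℝ and q ∈ ℝ such that c_0 = b_{-1} + (1−τ_0)ℓ_0 − q·b; c_s = b + (1−τ_s)ℓ_s for s = 1, …, S; (1−τ_s)/c_s = 1/(2√(1−ℓ_s)) for s = 0, …, S; q/c_0 = β·∑_{s=1}^S p_s/c_s; q·b = b_{-1} − τ_0ℓ_0 + g_0; and b = τ_sℓ_s − g_s for s = 1, …, S. (2) ℓ_s > g_s for all s = 0, …, S, b = f(ℓ_s; g_s) for s = 1, …, S, and b_{-1} = f(ℓ_0; g_0) + (ℓ_0 − g_0)·β·∑_{s=1}^S p_s·h(ℓ_s). -/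

import Mathlib

/-- `h(ℓ) = 1 − ℓ/(2√(1−ℓ))`. -/
noncomputable def hfun (l : ℝ) : ℝ := 1 - l / (2 * Real.sqrt (1 - l))

/-- `f(ℓ; g) = (ℓ − g)·h(ℓ)`, the government net surplus function. -/
noncomputable def ffun (l g : ℝ) : ℝ := (l - g) * hfun l

/-- **simplification of the Ramsey constraints.** For `S ≥ 1` states with
probabilities `p_s > 0` summing to one, `b > 0` and labor supplies in `[0,1)`, the system
consisting of the household budget constraints, intratemporal first-order conditions,
Euler equation and government budget constraints (with `u(c) = log c`,
`v(ℓ) = √(1−ℓ)`) has a solution `(c, τ, q)` with `c > 0` if and only if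
`ℓ_s > g_s` for all `s`, `b = f(ℓ_s; g_s)` for `s = 1,…,S`, and
`b₋₁ = f(ℓ₀; g₀) + (ℓ₀ − g₀)·β·∑_s p_s·h(ℓ_s)`. -/
lemma key (l g c τ : ℝ) (hl : l ∈ Set.Ico (0:ℝ) 1) (hc : 0 < c) (hcl : c = l - g)
    (hfoc : (1-τ)/c = 1/(2*Real.sqrt (1-l))) : τ*l - g = ffun l g := by
  have hs : 0 < Real.sqrt (1-l) := Real.sqrt_pos.mpr (by linarith [hl.2])
  unfold ffun hfun
  field_simp at hfoc ⊢
  subst hcl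
  linear_combination (-l) * hfoc

lemma key2 (l g : ℝ) (hl : l ∈ Set.Ico (0:ℝ) 1) (hgl : g < l) :
    ((1 : ℝ) - (1 - (l-g)/(2*Real.sqrt (1-l)))) / (l-g) = 1/(2*Real.sqrt (1-l)) := by
  have hs : 0 < Real.sqrt (1-l) := Real.sqrt_pos.mpr (by linarith [hl.2])
  have : l - g ≠ 0 := by linarith
  field_simp
  ring

theorem stmt9 (S : ℕ) (hS : 1 ≤ S) (β : ℝ) (hβ : 0 < β)
    (p : Fin S → ℝ) (hp : ∀ s, 0 < p s) (hpsum : ∑ s, p s = 1)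
    (g0 : ℝ) (g : Fin S → ℝ) (bm1 : ℝ) (b : ℝ) (hb : 0 < b)
    (l0 : ℝ) (hl0 : l0 ∈ Set.Ico (0 : ℝ) 1)
    (l : Fin S → ℝ) (hl : ∀ s, l s ∈ Set.Ico (0 : ℝ) 1) :
    (∃ (c0 : ℝ) (c : Fin S → ℝ) (τ0 : ℝ) (τ : Fin S → ℝ) (q : ℝ),
      0 < c0 ∧ (∀ s, 0 < c s) ∧
      c0 = bm1 + (1 - τ0) * l0 - q * b ∧
      (∀ s, c s = b + (1 - τ s) * l s) ∧
      (1 - τ0) / c0 = 1 / (2 * Real.sqrt (1 - l0)) ∧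
      (∀ s, (1 - τ s) / c s = 1 / (2 * Real.sqrt (1 - l s))) ∧
      q / c0 = β * ∑ s, p s / c s ∧
      q * b = bm1 - τ0 * l0 + g0 ∧
      (∀ s, b = τ s * l s - g s))
    ↔ (g0 < l0 ∧ (∀ s, g s < l s) ∧ (∀ s, b = ffun (l s) (g s)) ∧
        bm1 = ffun l0 g0 + (l0 - g0) * (β * ∑ s, p s * hfun (l s))) := by
  constructor
  · rintro ⟨c0, c, τ0, τ, q, hc0, hc, hb0, hbs, hf0, hfs, heul, hg0, hgs⟩
    -- consumption identities
    have hcs : ∀ s, c s = l s - g s := by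
      intro s; linear_combination hbs s + hgs s
    have hc0' : c0 = l0 - g0 := by linear_combination hb0 - hg0
    have hgl : ∀ s, g s < l s := fun s => by have := hc s; rw [hcs s] at this; linarith
    have hgl0 : g0 < l0 := by have := hc0; rw [hc0'] at this; linarith
    have hbf : ∀ s, b = ffun (l s) (g s) := by
      intro s
      rw [hgs s, key (l s) (g s) (c s) (τ s) (hl s) (hc s) (hcs s) (hfs s)]
    refine ⟨hgl0, hgl, hbf, ?_⟩
    -- q * b = (l0 - g0) * β * ∑ p h
    have hq : q = c0 * (β * ∑ s, p s / c s) := by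
      field_simp at heul
      linarith [heul]
    have hsum : (∑ s, p s / c s) * b = ∑ s, p s * hfun (l s) := by
      rw [Finset.sum_mul]
      apply Finset.sum_congr rfl
      intro s _
      have hcsp := hc s
      have hbv : b = c s * hfun (l s) := by rw [hbf s, ffun, hcs s]
      field_simp [hbv]
      rw [hbv]; ring
    have hτ0 : τ0 * l0 - g0 = ffun l0 g0 := key l0 g0 c0 τ0 hl0 hc0 hc0' hf0
    have : q * b = c0 * (β * ∑ s, p s * hfun (l s)) := by
      rw [hq]; rw [← hsum]; ring
    rw [this, hc0'] at hg0
    linarith [hg0, hτ0]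
  · rintro ⟨hgl0, hgl, hbf, hbm⟩
    have hs0 : 0 < Real.sqrt (1 - l0) := Real.sqrt_pos.mpr (by linarith [hl0.2])
    have hss : ∀ s, 0 < Real.sqrt (1 - l s) := fun s => Real.sqrt_pos.mpr (by linarith [(hl s).2])
    refine ⟨l0 - g0, fun s => l s - g s,
      1 - (l0 - g0)/(2*Real.sqrt (1-l0)), fun s => 1 - (l s - g s)/(2*Real.sqrt (1-l s)),
      (l0 - g0) * (β * ∑ s, p s / (l s - g s)), by linarith, fun s => by simpa using sub_pos.mpr (hgl s),
      ?_, ?_, ?_, ?_, ?_, ?_, ?_⟩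
    · -- budget 0
      have hqb : (l0 - g0) * (β * ∑ s, p s / (l s - g s)) * b
          = (l0 - g0) * (β * ∑ s, p s * hfun (l s)) := by
        have : (∑ s, p s / (l s - g s)) * b = ∑ s, p s * hfun (l s) := by
          rw [Finset.sum_mul]
          apply Finset.sum_congr rfl
          intro s _
          have h1 : l s - g s ≠ 0 := by have := hgl s; linarith
          have hbv : b = (l s - g s) * hfun (l s) := hbf s
          field_simp [hbv]
          rw [hbv]; ring
        rw [← this]; ring
      rw [hqb, hbm, ffun, hfun]
      field_simp
      ring
    · -- budget s
      intro s
      rw [hbf s, ffun, hfun]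
      have hsne : Real.sqrt (1 - l s) ≠ 0 := ne_of_gt (hss s)
      field_simp
      ring
    · exact key2 l0 g0 hl0 hgl0
    · exact fun s => key2 (l s) (g s) (hl s) (hgl s)
    · -- Euler
      have hne : l0 - g0 ≠ 0 := by linarith
      field_simp
    · -- gov 0
      have hqb : (l0 - g0) * (β * ∑ s, p s / (l s - g s)) * b
          = (l0 - g0) * (β * ∑ s, p s * hfun (l s)) := by
        have : (∑ s, p s / (l s - g s)) * b = ∑ s, p s * hfun (l s) := by
          rw [Finset.sum_mul]
          apply Finset.sum_congr rfl
          intro s _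
          have h1 : l s - g s ≠ 0 := by have := hgl s; linarith
          have hbv : b = (l s - g s) * hfun (l s) := hbf s
          field_simp [hbv]
          rw [hbv]; ring
        rw [← this]; ring
      rw [hqb, hbm, ffun, hfun]
      field_simp
      ring
    · -- gov s
      intro s
      rw [hbf s, ffun, hfun]
      have hsne : Real.sqrt (1 - l s) ≠ 0 := ne_of_gt (hss s)
      field_simp
      ring
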